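/- With the same setup (1_m − B_0 and B_∞ invertible), the matrix G_0 := Σ_{i=1}^N F_i + F_∞ = Σ_{i=1}^N F_i + 1_{(N+1)m} − F̂ is invertible, i.e., ker G_0 = 0. -/
import Mathlib


open Matrix in
/-- If `1_m − B_0` and `B_∞` are invertible (and `q^λ ≠ 0`, written `c ≠ 0`),
then `G_0 = Σ_{i=1}^N F_i + 1 − F̂` is invertible. -/
theorem qmc_G0_invertible (m N : ℕ) (c : ℂ) (hc : c ≠ 0)
    (Bl : Fin N → Matrix (Fin m) (Fin m) ℂ) (Binf : Matrix (Fin m) (Fin m) ℂ)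
    (B0 : Matrix (Fin m) (Fin m) ℂ) (hB0 : B0 = 1 - ∑ i, Bl i - Binf)
    (hB0inv : IsUnit ((1 : Matrix (Fin m) (Fin m) ℂ) - B0))
    (hBinfinv : IsUnit Binf)
    (Fhat : Matrix (Fin (N + 1) × Fin m) (Fin (N + 1) × Fin m) ℂ)
    (hFhat : ∀ p r, Fhat p r = (Fin.cons B0 Bl : Fin (N + 1) → Matrix (Fin m) (Fin m) ℂ) r.1 p.2 r.2)
    (F : Fin N → Matrix (Fin (N + 1) × Fin m) (Fin (N + 1) × Fin m) ℂ)
    (hF : ∀ k p r, F k p r = if p.1 = k.succ then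
        ((Fin.cons B0 Bl : Fin (N + 1) → Matrix (Fin m) (Fin m) ℂ) r.1 p.2 r.2 - if r.1 = k.succ ∧ p.2 = r.2 then 1 - c else 0)
      else 0) :
    IsUnit ((∑ k, F k) + 1 - Fhat) := by
  set A : Fin (N + 1) → Matrix (Fin m) (Fin m) ℂ := Fin.cons B0 Bl with hA
  set G : Matrix (Fin (N + 1) × Fin m) (Fin (N + 1) × Fin m) ℂ := (∑ k, F k) + 1 - Fhat with hG
  -- entrywise description of G
  have hGentry : ∀ p r, G p r =
      if p.1 = 0 then ((if p = r then 1 else 0) - A r.1 p.2 r.2)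
      else (if p = r then c else 0) := by
    intro p r
    have hsum : (∑ k, F k) p r = ∑ k, F k p r := by
      simp [Matrix.sum_apply]
    rw [hG]
    simp only [Matrix.sub_apply, Matrix.add_apply, Matrix.one_apply, hFhat, hsum]
    by_cases hp : p.1 = 0
    · have hz : ∀ k : Fin N, F k p r = 0 := by
        intro k
        rw [hF]
        have : p.1 ≠ k.succ := by rw [hp]; exact (Fin.succ_ne_zero k).symm
        simp [this]
      simp [hp, Finset.sum_congr rfl (fun k _ => hz k)]
    · obtain ⟨j, hj⟩ := Fin.exists_succ_eq_of_ne_zero hp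
      have hsum2 : (∑ k, F k p r) =
          A r.1 p.2 r.2 - if r.1 = j.succ ∧ p.2 = r.2 then 1 - c else 0 := by
        rw [Finset.sum_eq_single j]
        · rw [hF]; simp [hj.symm]
        · intro k _ hkj
          rw [hF]
          have : p.1 ≠ k.succ := by
            rw [← hj]
            exact fun h => hkj (Fin.succ_injective _ h.symm)
          simp [this]
        · simp
      rw [hsum2]
      have hiff : (r.1 = j.succ ∧ p.2 = r.2) ↔ p = r := by
        constructor
        · rintro ⟨h1, h2⟩; exact Prod.ext (by rw [← hj, h1]) h2
        · intro h; exact ⟨by rw [← h, ← hj], by rw [h]⟩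
      simp only [hp, if_neg hp, hiff]
      by_cases hpr : p = r <;> simp [hpr] <;> ring
  -- injectivity of mulVec
  rw [← Matrix.mulVec_injective_iff_isUnit]
  have hker : ∀ v, G *ᵥ v = 0 → v = 0 := by
    intro v hv
    -- for p.1 ≠ 0, v p = 0
    have h1 : ∀ p : Fin (N + 1) × Fin m, p.1 ≠ 0 → v p = 0 := by
      intro p hp
      have := congrFun hv p
      rw [Matrix.mulVec, dotProduct] at this
      have hterm : ∀ r, G p r * v r = if p = r then c * v r else 0 := by
        intro r
        rw [hGentry, if_neg hp, ite_mul, zero_mul]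
      rw [Finset.sum_congr rfl (fun r _ => hterm r)] at this
      simp only [Finset.sum_ite_eq, Finset.mem_univ, if_true, Pi.zero_apply] at this
      exact (mul_eq_zero.mp this).resolve_left hc
    -- the zero-block part
    set w : Fin m → ℂ := fun x => v (0, x) with hw
    have h0 : ((1 - B0) *ᵥ w) = 0 := by
      funext x
      have := congrFun hv (0, x)
      rw [Matrix.mulVec, dotProduct] at this
      have hterm : ∀ r : Fin (N + 1) × Fin m,
          G (0, x) r * v r = (if (0, x) = r then v r else 0) - (if r.1 = 0 then B0 x r.2 * v r else 0) := by
        intro r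
        have key : A r.1 (0, x).2 r.2 * v r = if r.1 = 0 then B0 x r.2 * v r else 0 := by
          by_cases hr : r.1 = 0
          · rw [if_pos hr, hr]
            simp [hA]
          · rw [if_neg hr, h1 r hr, mul_zero]
        rw [hGentry, if_pos rfl, sub_mul, ite_mul, one_mul, zero_mul, key]
      rw [Finset.sum_congr rfl (fun r _ => hterm r)] at this
      rw [Finset.sum_sub_distrib] at this
      simp only [Finset.sum_ite_eq, Finset.mem_univ, if_true] at this
      rw [Fintype.sum_prod_type] at this
      have hinner : ∀ r1 : Fin (N + 1), (∑ r2, if (r1, r2).1 = 0 then B0 x ((r1, r2).2) * v (r1, r2) else 0)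
          = if r1 = 0 then ∑ r2, B0 x r2 * v (r1, r2) else 0 := by
        intro r1
        by_cases hr1 : r1 = 0 <;> simp [hr1]
      rw [Finset.sum_congr rfl (fun r1 _ => hinner r1)] at this
      simp only [Finset.sum_ite_eq', Finset.mem_univ, if_true, Pi.zero_apply] at this
      simp only [Matrix.sub_mulVec, Pi.sub_apply, Matrix.one_mulVec, Pi.zero_apply]
      rw [Matrix.mulVec, dotProduct]
      exact this
    have hwz : w = 0 := by
      have hinj := Matrix.mulVec_injective_iff_isUnit.mpr hB0inv
      have : (1 - B0) *ᵥ w = (1 - B0) *ᵥ 0 := by rw [h0, Matrix.mulVec_zero]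
      exact hinj this
    funext p
    by_cases hp : p.1 = 0
    · have : v p = w p.2 := by rw [hw]; congr 1; exact Prod.ext hp rfl
      rw [this, hwz]; rfl
    · exact h1 p hp
  intro v u h
  have hz : G *ᵥ (v - u) = 0 := by rw [Matrix.mulVec_sub, h, sub_self]
  exact sub_eq_zero.mp (hker _ hz)
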